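/- arXiv:1209.6179 — 5 statements merged into one kernel-verified Lean document; each statement's English description precedes it below -/
import Mathlib

section
/- Let S be a left-cancellative semigroup. Then the following conditions are equivalent: (a) S is left-amenable, i.e. there exists a finitely additive left-invariant probability measure defined on all subsets of S; (b) for every finite subset K of S and every real number ε > 0, there exists a nonempty finite subset F of S such that α(F, K) ≤ ε. -/
/-- A semigroup `S` is left-amenable if there is a finitely additive left-invariant
probability measure `μ` defined on all subsets of `S`. -/
def LeftAmenable (S : Type*) [Mul S] : Prop :=
  ∃ μ : Set S → ℝ,
    (∀ A : Set S, 0 ≤ μ A ∧ μ A ≤ 1) ∧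
    (∀ A B : Set S, Disjoint A B → μ (A ∪ B) = μ A + μ B) ∧
    μ Set.univ = 1 ∧
    (∀ (s : S) (A : Set S), μ ((s * ·) ⁻¹' A) = μ A)

/-- The right `K`-boundary of a finite subset `A` of a semigroup:
`∂_K(A) = A \ int_K(A) = {s ∈ A : ¬(Ks ⊆ A)}`. -/
def finBoundary {S : Type*} [Mul S] [DecidableEq S] (K A : Finset S) : Finset S :=
  A.filter fun s => ¬ ∀ k ∈ K, k * s ∈ A

/-- The amenability constant of `A` with respect to `K`: `α(A, K) = |∂_K(A)| / |A|`. -/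
noncomputable def amenConst {S : Type*} [Mul S] [DecidableEq S] (A K : Finset S) : ℝ :=
  ((finBoundary K A).card : ℝ) / (A.card : ℝ)

set_option linter.unusedSectionVars false
set_option maxHeartbeats 1000000

open scoped Pointwise

namespace AmenAux

variable {S : Type*} [Semigroup S] [IsLeftCancelMul S] [DecidableEq S]

def finInterior (K A : Finset S) : Finset S := A.filter fun s => ∀ k ∈ K, k * s ∈ A

lemma mem_finInterior {K A : Finset S} {s : S} :
    s ∈ finInterior K A ↔ s ∈ A ∧ ∀ k ∈ K, k * s ∈ A := Finset.mem_filter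

lemma interior_card_add (K A : Finset S) :
    (finInterior K A).card + (finBoundary K A).card = A.card :=
  Finset.card_filter_add_card_filter_not _

lemma finInterior_subset (K A : Finset S) : finInterior K A ⊆ A := Finset.filter_subset _ _

def kiter (K : Finset S) : ℕ → Finset S
  | 0 => K
  | n+1 => K ∪ K * kiter K n

lemma subset_kiter (K : Finset S) (n : ℕ) : K ⊆ kiter K n := by
  cases n with
  | zero => exact Finset.Subset.refl _
  | succ n => exact Finset.subset_union_left

lemma kiter_mono (K : Finset S) (n : ℕ) : kiter K n ⊆ kiter K (n+1) := by
  induction n with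
  | zero => exact Finset.subset_union_left
  | succ n ih =>
      show K ∪ K * kiter K n ⊆ K ∪ K * kiter K (n+1)
      exact Finset.union_subset_union_right (Finset.mul_subset_mul_left ih)

lemma kiter_interior (K F : Finset S) (n : ℕ) :
    finInterior (kiter K (n+1)) F ⊆ finInterior (kiter K n) (finInterior K F) := by
  intro s hs
  rw [mem_finInterior] at hs
  obtain ⟨hsF, hall⟩ := hs
  have hK : ∀ k ∈ K, k * s ∈ F := fun k hk => hall k (Finset.mem_union_left _ hk)
  rw [mem_finInterior]
  refine ⟨mem_finInterior.2 ⟨hsF, hK⟩, ?_⟩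
  intro j hj
  rw [mem_finInterior]
  constructor
  · exact hall j (kiter_mono K n hj)
  · intro k hk
    rw [← mul_assoc]
    exact hall (k * j) (Finset.mem_union_right _ (Finset.mul_mem_mul hk hj))

lemma interior_small {K : Finset S} {ε : ℝ} (hε1 : ε ≤ 1)
    (H : ∀ F : Finset S, F.Nonempty → ε < amenConst F K) :
    ∀ F : Finset S, ((finInterior K F).card : ℝ) ≤ (1 - ε) * F.card := by
  intro F
  rcases F.eq_empty_or_nonempty with rfl | hF
  · simp [finInterior]
  · have hcard : (0:ℝ) < F.card := by exact_mod_cast Finset.card_pos.2 hF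
    have hb : ε * F.card ≤ ((finBoundary K F).card : ℝ) := by
      have := H F hF
      rw [amenConst, lt_div_iff₀ hcard] at this
      exact this.le
    have hsum : ((finInterior K F).card : ℝ) + (finBoundary K F).card = F.card := by
      exact_mod_cast interior_card_add K F
    nlinarith

lemma interior_iter_small {K : Finset S} {ε : ℝ} (hε0 : 0 < ε) (hε1 : ε ≤ 1)
    (H : ∀ F : Finset S, F.Nonempty → ε < amenConst F K) :
    ∀ (n : ℕ) (F : Finset S),
      ((finInterior (kiter K n) F).card : ℝ) ≤ (1 - ε)^(n+1) * F.card := by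
  intro n
  induction n with
  | zero => intro F; simpa [kiter] using interior_small hε1 H F
  | succ n ih =>
      intro F
      have h1 : ((finInterior (kiter K (n+1)) F).card : ℝ)
          ≤ ((finInterior (kiter K n) (finInterior K F)).card : ℝ) := by
        exact_mod_cast Finset.card_le_card (kiter_interior K F n)
      have h2 := ih (finInterior K F)
      have h3 := interior_small hε1 H F
      have hpow : (0:ℝ) ≤ (1 - ε)^(n+1) := pow_nonneg (by linarith) _
      calc ((finInterior (kiter K (n+1)) F).card : ℝ)
          ≤ (1 - ε)^(n+1) * (finInterior K F).card := h1.trans h2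
        _ ≤ (1 - ε)^(n+1) * ((1 - ε) * F.card) := by
            exact mul_le_mul_of_nonneg_left h3 hpow
        _ = (1 - ε)^(n+2) * F.card := by ring

lemma boundary_le_mul (L F : Finset S) :
    (finBoundary L F).card ≤ L.card * ((L * F) \ F).card := by
  have hsub : finBoundary L F ⊆
      L.biUnion (fun k => (finBoundary L F).filter fun s => k * s ∉ F) := by
    intro s hs
    have hs' := hs
    rw [finBoundary, Finset.mem_filter] at hs'
    push_neg at hs'
    obtain ⟨hsF, k, hk, hks⟩ := hs'
    exact Finset.mem_biUnion.2 ⟨k, hk, Finset.mem_filter.2 ⟨hs, hks⟩⟩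
  calc (finBoundary L F).card
      ≤ (L.biUnion (fun k => (finBoundary L F).filter fun s => k * s ∉ F)).card :=
        Finset.card_le_card hsub
    _ ≤ ∑ k ∈ L, ((finBoundary L F).filter fun s => k * s ∉ F).card :=
        Finset.card_biUnion_le
    _ ≤ ∑ k ∈ L, ((L * F) \ F).card := by
        refine Finset.sum_le_sum fun k hk => ?_
        refine Finset.card_le_card_of_injOn (fun s => k * s) ?_ ?_
        · intro s hs
          rw [Finset.mem_coe, Finset.mem_filter] at hs
          have hsF : s ∈ F := Finset.filter_subset _ _ hs.1
          exact Finset.mem_sdiff.2 ⟨Finset.mul_mem_mul hk hsF, hs.2⟩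
        · intro a _ b _ hab
          exact mul_left_cancel hab
    _ = L.card * ((L * F) \ F).card := by rw [Finset.sum_const, smul_eq_mul]

lemma expansion_step {L : Finset S}
    (hhalf : ∀ F : Finset S, (F.card : ℝ) ≤ 2 * (finBoundary L F).card) (F : Finset S) :
    (1 + 1 / (2 * L.card)) * F.card ≤ ((L * F ∪ F).card : ℝ) := by
  rcases Nat.eq_zero_or_pos L.card with hL | hL
  · -- L empty: boundary empty: F.card ≤ 0, so F empty
    have hb : finBoundary L F = ∅ := by
      rw [Finset.card_eq_zero] at hL
      subst hL
      simp [finBoundary]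
    have : (F.card : ℝ) ≤ 0 := by simpa [hb] using hhalf F
    have hF : (F.card : ℝ) = 0 := le_antisymm this (by positivity)
    rw [hF]
    simp [Nat.cast_nonneg]
  · have hc : (0:ℝ) < L.card := by exact_mod_cast hL
    have hcard : (L * F ∪ F).card = F.card + ((L * F) \ F).card := by
      rw [Finset.union_comm, ← Finset.union_sdiff_self_eq_union]
      exact Finset.card_union_of_disjoint (Finset.disjoint_sdiff)
    have h1 : (F.card : ℝ) ≤ 2 * (L.card * ((L * F) \ F).card) := by
      refine (hhalf F).trans ?_
      have := boundary_le_mul L F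
      have : ((finBoundary L F).card : ℝ) ≤ L.card * ((L * F) \ F).card := by
        exact_mod_cast this
      linarith
    rw [hcard]
    push_cast
    have h2 : (F.card:ℝ) / (2*L.card) ≤ ((L*F)\F).card := by
      rw [div_le_iff₀ (by positivity)]
      nlinarith
    have h3 : (1 + 1 / (2 * (L.card:ℝ))) * F.card = F.card + F.card / (2*L.card) := by ring
    linarith

lemma expansion_iter {L : Finset S}
    (hhalf : ∀ F : Finset S, (F.card : ℝ) ≤ 2 * (finBoundary L F).card) :
    ∀ (m : ℕ) (F : Finset S),
      (1 + 1/(2*(L.card:ℝ)))^(m+1) * F.card ≤ ((kiter L m * F ∪ F).card : ℝ) := by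
  set q := 1 + 1/(2*(L.card:ℝ)) with hq
  have hq1 : 1 ≤ q := le_add_of_nonneg_right (by positivity)
  have hq0 : 0 ≤ q := by linarith
  intro m
  induction m with
  | zero =>
      intro F
      rw [hq, pow_one]
      exact expansion_step hhalf F
  | succ m ih =>
      intro F
      set F' := kiter L m * F ∪ F with hF'
      have hsub : L * F' ∪ F' ⊆ kiter L (m+1) * F ∪ F := by
        have e1 : L * F' = L * (kiter L m * F) ∪ L * F := Finset.mul_union
        have e2 : L * (kiter L m * F) = (L * kiter L m) * F := (mul_assoc _ _ _).symm
        have s1 : (L * kiter L m) * F ⊆ kiter L (m+1) * F :=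
          Finset.mul_subset_mul_right Finset.subset_union_right
        have s2 : L * F ⊆ kiter L (m+1) * F :=
          Finset.mul_subset_mul_right Finset.subset_union_left
        have s3 : kiter L m * F ⊆ kiter L (m+1) * F :=
          Finset.mul_subset_mul_right (kiter_mono L m)
        rw [hF', e1, e2]
        refine Finset.union_subset (Finset.union_subset
          (s1.trans Finset.subset_union_left) (s2.trans Finset.subset_union_left))
          (Finset.union_subset (s3.trans Finset.subset_union_left) Finset.subset_union_right)
      calc q^(m+2) * F.card = q * (q^(m+1) * F.card) := by ring
        _ ≤ q * F'.card := by
            exact mul_le_mul_of_nonneg_left (ih F) hq0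
        _ ≤ ((L * F' ∪ F').card : ℝ) := expansion_step hhalf F'
        _ ≤ ((kiter L (m+1) * F ∪ F).card : ℝ) := by
            exact_mod_cast Finset.card_le_card hsub

lemma exists_doubling {L : Finset S}
    (hhalf : ∀ F : Finset S, (F.card : ℝ) ≤ 2 * (finBoundary L F).card) :
    ∃ T : Finset S, ∀ F : Finset S, 2 * F.card ≤ (T * F ∪ F).card := by
  rcases L.eq_empty_or_nonempty with rfl | hL
  · refine ⟨∅, fun F => ?_⟩
    have : (F.card : ℝ) ≤ 0 := by simpa [finBoundary] using hhalf F
    have hF : F.card = 0 := by exact_mod_cast le_antisymm this (by positivity)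
    simp [hF]
  · have hc : (0:ℝ) < L.card := by exact_mod_cast Finset.card_pos.2 hL
    set q := 1 + 1/(2*(L.card:ℝ)) with hq
    have hq1 : 1 < q := by
      rw [hq]
      nlinarith [one_div_pos.2 (by positivity : (0:ℝ) < 2*L.card)]
    obtain ⟨n, hn⟩ := pow_unbounded_of_one_lt (2:ℝ) hq1
    refine ⟨kiter L n, fun F => ?_⟩
    have h1 := expansion_iter hhalf n F
    have h2 : (2:ℝ) * F.card ≤ q^(n+1) * F.card := by
      have : q^n ≤ q^(n+1) := pow_le_pow_right₀ (le_of_lt hq1) (Nat.le_succ n)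
      have h4 : (0:ℝ) ≤ (F.card:ℝ) := by positivity
      nlinarith
    have : (2:ℝ) * F.card ≤ ((kiter L n * F ∪ F).card : ℝ) := le_trans h2 h1
    exact_mod_cast this

lemma exists_injections {T : Finset S}
    (hd : ∀ F : Finset S, 2 * F.card ≤ (T * F ∪ F).card) :
    ∃ f : S × Bool → S, Function.Injective f ∧
      ∀ x : S × Bool, f x = x.1 ∨ ∃ k ∈ T, f x = k * x.1 := by
  set t : S × Bool → Finset S := fun x => insert x.1 (T.image (fun k => k * x.1)) with ht
  have hall : ∀ I : Finset (S × Bool), I.card ≤ (I.biUnion t).card := by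
    intro I
    set F := I.image Prod.fst with hF
    have h1 : I.card ≤ 2 * F.card := by
      calc I.card ≤ (F ×ˢ (Finset.univ : Finset Bool)).card := by
            refine Finset.card_le_card ?_
            intro x hx
            exact Finset.mem_product.2 ⟨Finset.mem_image_of_mem _ hx, Finset.mem_univ _⟩
        _ = 2 * F.card := by
            rw [Finset.card_product]
            simp [mul_comm]
    have h2 : T * F ∪ F ⊆ I.biUnion t := by
      intro x hx
      rcases Finset.mem_union.1 hx with hx | hx
      · obtain ⟨k, hk, s, hs, rfl⟩ := Finset.mem_mul.1 hx
        obtain ⟨i, hi, rfl⟩ := Finset.mem_image.1 hs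
        refine Finset.mem_biUnion.2 ⟨i, hi, ?_⟩
        exact Finset.mem_insert.2 (Or.inr (Finset.mem_image.2 ⟨k, hk, rfl⟩))
      · obtain ⟨i, hi, rfl⟩ := Finset.mem_image.1 hx
        exact Finset.mem_biUnion.2 ⟨i, hi, Finset.mem_insert_self _ _⟩
    calc I.card ≤ 2 * F.card := h1
      _ ≤ (T * F ∪ F).card := hd F
      _ ≤ (I.biUnion t).card := Finset.card_le_card h2
  obtain ⟨f, hinj, hf⟩ := (Finset.all_card_le_biUnion_card_iff_exists_injective t).1 hall
  refine ⟨f, hinj, fun x => ?_⟩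
  rcases Finset.mem_insert.1 (hf x) with h | h
  · exact Or.inl h
  · obtain ⟨k, hk, hkx⟩ := Finset.mem_image.1 h
    exact Or.inr ⟨k, hk, hkx.symm⟩

section Measure

variable (μ : Set S → ℝ)

lemma mu_empty (hadd : ∀ A B : Set S, Disjoint A B → μ (A ∪ B) = μ A + μ B) : μ ∅ = 0 := by
  have := hadd ∅ ∅ disjoint_bot_left
  simp at this
  linarith

lemma mu_mono (hpos : ∀ A : Set S, 0 ≤ μ A)
    (hadd : ∀ A B : Set S, Disjoint A B → μ (A ∪ B) = μ A + μ B)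
    {A B : Set S} (h : A ⊆ B) : μ A ≤ μ B := by
  have hd : Disjoint A (B \ A) := disjoint_sdiff_self_right
  have := hadd A (B \ A) hd
  rw [Set.union_diff_cancel h] at this
  have := hpos (B \ A)
  linarith

lemma mu_biUnion (hadd : ∀ A B : Set S, Disjoint A B → μ (A ∪ B) = μ A + μ B)
    {ι : Type*} (I : Finset ι) (B : ι → Set S)
    (hdisj : ∀ i ∈ I, ∀ j ∈ I, i ≠ j → Disjoint (B i) (B j)) :
    μ (⋃ i ∈ I, B i) = ∑ i ∈ I, μ (B i) := by
  classical
  induction I using Finset.induction_on with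
  | empty => simp [mu_empty μ hadd]
  | @insert a I ha ih =>
      have hsub : ∀ i ∈ I, ∀ j ∈ I, i ≠ j → Disjoint (B i) (B j) := fun i hi j hj hij =>
        hdisj i (Finset.mem_insert_of_mem hi) j (Finset.mem_insert_of_mem hj) hij
      have hd : Disjoint (B a) (⋃ i ∈ I, B i) := by
        simp only [Set.disjoint_iUnion_right]
        intro i hi
        exact hdisj a (Finset.mem_insert_self a I) i (Finset.mem_insert_of_mem hi)
          (fun h => ha (h ▸ hi))
      rw [Finset.set_biUnion_insert, hadd _ _ hd, Finset.sum_insert ha, ih hsub]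

lemma mu_image_mul (hinv : ∀ (s : S) (A : Set S), μ ((s * ·) ⁻¹' A) = μ A)
    (k : S) (C : Set S) : μ ((k * ·) '' C) = μ C := by
  have h := hinv k ((k * ·) '' C)
  rw [Set.preimage_image_eq C (mul_right_injective k)] at h
  exact h.symm

lemma mu_image_piecewise
    (hadd : ∀ A B : Set S, Disjoint A B → μ (A ∪ B) = μ A + μ B)
    (hinv : ∀ (s : S) (A : Set S), μ ((s * ·) ⁻¹' A) = μ A)
    (T : Finset S) (g : S → S) (hg : Function.Injective g)
    (hpw : ∀ s, g s = s ∨ ∃ k ∈ T, g s = k * s) (A : Set S) :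
    μ (g '' A) = μ A := by
  classical
  set P : S → Prop := fun s => ∃ k : {k // k ∈ T}, g s = ↑k * s ∧ g s ≠ s with hP
  set lab : S → Option {k // k ∈ T} := fun s => if h : P s then some h.choose else none
    with hlab
  set B : Option {k // k ∈ T} → Set S := fun o => A ∩ lab ⁻¹' {o} with hB
  have hlab_none : ∀ s, lab s = none → g s = s := by
    intro s hs
    by_cases h : P s
    · rw [hlab] at hs; simp [h] at hs
    · rcases hpw s with h' | h'
      · exact h'
      · by_cases hgs : g s = s
        · exact hgs
        · obtain ⟨k, hk, hks⟩ := h'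
          exact absurd ⟨⟨k, hk⟩, hks, hgs⟩ h
  have hlab_some : ∀ s (k : {k // k ∈ T}), lab s = some k → g s = ↑k * s := by
    intro s k hs
    by_cases h : P s
    · rw [hlab] at hs
      simp only [h, dif_pos] at hs
      have : h.choose = k := Option.some.inj hs
      have hspec := h.choose_spec.1
      rwa [this] at hspec
    · rw [hlab] at hs; simp [h] at hs
  have hBdisj : ∀ o o', o ≠ o' → Disjoint (B o) (B o') := by
    intro o o' hoo
    rw [Set.disjoint_left]
    rintro x ⟨_, hx⟩ ⟨_, hx'⟩
    simp only [Set.mem_preimage, Set.mem_singleton_iff] at hx hx'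
    exact hoo (hx ▸ hx' ▸ rfl)
  have hcover : (⋃ o ∈ (Finset.univ : Finset (Option {k // k ∈ T})), B o) = A := by
    ext x
    simp only [Set.mem_iUnion, hB, Set.mem_inter_iff, Set.mem_preimage,
      Set.mem_singleton_iff, Finset.mem_univ, exists_prop, true_and]
    constructor
    · rintro ⟨o, hx, _⟩; exact hx
    · intro hx; exact ⟨lab x, hx, rfl⟩
  have himg : ∀ o, μ (g '' B o) = μ (B o) := by
    intro o
    match o with
    | none =>
        have he : g '' B none = B none := by
          apply Set.Subset.antisymm
          · rintro x ⟨s, hs, rfl⟩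
            have := hlab_none s hs.2
            rwa [this]
          · intro x hx
            exact ⟨x, hx, hlab_none x hx.2⟩
        rw [he]
    | some k =>
        have he : g '' B (some k) = (fun x => (↑k : S) * x) '' B (some k) := by
          apply Set.image_congr
          intro s hs
          exact hlab_some s k hs.2
        rw [he, mu_image_mul μ hinv]
  have hsum1 : μ (g '' A) = ∑ o : Option {k // k ∈ T}, μ (g '' B o) := by
    have : g '' A = ⋃ o ∈ (Finset.univ : Finset (Option {k // k ∈ T})), g '' B o := by
      rw [← hcover]
      simp [Set.image_iUnion]
    rw [this]
    exact mu_biUnion μ hadd _ _ (fun i _ j _ hij =>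
      (Set.disjoint_image_iff hg).2 (hBdisj i j hij))
  have hsum2 : μ A = ∑ o : Option {k // k ∈ T}, μ (B o) := by
    rw [← hcover]
    exact mu_biUnion μ hadd _ _ (fun i _ j _ hij => hBdisj i j hij)
  rw [hsum1, hsum2]
  exact Finset.sum_congr rfl fun o _ => himg o

lemma measure_contradiction
    (hpos : ∀ A : Set S, 0 ≤ μ A)
    (hadd : ∀ A B : Set S, Disjoint A B → μ (A ∪ B) = μ A + μ B)
    (huniv : μ Set.univ = 1)
    (hinv : ∀ (s : S) (A : Set S), μ ((s * ·) ⁻¹' A) = μ A)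
    {T : Finset S} (f : S × Bool → S) (hinj : Function.Injective f)
    (hf : ∀ x : S × Bool, f x = x.1 ∨ ∃ k ∈ T, f x = k * x.1) : False := by
  classical
  set g : Bool → S → S := fun b s => f (s, b) with hg
  have hginj : ∀ b, Function.Injective (g b) := by
    intro b s t h
    have := hinj h
    exact (Prod.ext_iff.1 this).1
  have hμg : ∀ b, μ (Set.range (g b)) = 1 := by
    intro b
    have := mu_image_piecewise μ hadd hinv T (g b) (hginj b) (fun s => hf (s, b)) Set.univ
    rwa [Set.image_univ, huniv] at this
  have hdisj : Disjoint (Set.range (g false)) (Set.range (g true)) := by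
    rw [Set.disjoint_left]
    rintro x ⟨s, rfl⟩ ⟨t, ht⟩
    have := hinj ht
    simp [Prod.ext_iff] at this
  have h2 : μ (Set.range (g false) ∪ Set.range (g true)) = 2 := by
    rw [hadd _ _ hdisj, hμg, hμg]; norm_num
  have h3 : μ (Set.range (g false) ∪ Set.range (g true)) ≤ 1 := by
    rw [← huniv]
    exact mu_mono μ hpos hadd (Set.subset_univ _)
  linarith

end Measure

lemma folner_of_measure
    (μ : Set S → ℝ)
    (hbd : ∀ A : Set S, 0 ≤ μ A ∧ μ A ≤ 1)
    (hadd : ∀ A B : Set S, Disjoint A B → μ (A ∪ B) = μ A + μ B)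
    (huniv : μ Set.univ = 1)
    (hinv : ∀ (s : S) (A : Set S), μ ((s * ·) ⁻¹' A) = μ A)
    (K : Finset S) (ε : ℝ) (hε : 0 < ε) :
    ∃ F : Finset S, F.Nonempty ∧ amenConst F K ≤ ε := by
  by_contra hcon
  push_neg at hcon
  have hpos : ∀ A : Set S, 0 ≤ μ A := fun A => (hbd A).1
  have hSne : Nonempty S := by
    by_contra hS
    rw [not_nonempty_iff] at hS
    have he : (Set.univ : Set S) = ∅ := Set.univ_eq_empty_iff.2 hS
    rw [he, mu_empty μ hadd] at huniv
    norm_num at huniv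
  obtain ⟨s₀⟩ := hSne
  have hamen1 : amenConst {s₀} K ≤ 1 := by
    rw [amenConst]
    apply div_le_one_of_le₀
    · exact_mod_cast Finset.card_le_card (Finset.filter_subset _ _)
    · positivity
  have hε1 : ε < 1 := lt_of_lt_of_le (hcon {s₀} (Finset.singleton_nonempty s₀)) hamen1
  obtain ⟨n, hn⟩ := exists_pow_lt_of_lt_one (by norm_num : (0:ℝ) < 1/2)
    (by linarith : 1 - ε < 1)
  have hL : ∀ F : Finset S, (F.card : ℝ) ≤ 2 * (finBoundary (kiter K n) F).card := by
    intro F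
    have h1 := interior_iter_small hε hε1.le hcon n F
    have h2 : (1-ε)^(n+1) * F.card ≤ (1/2 : ℝ) * F.card := by
      have hpow : (1-ε)^(n+1) ≤ (1-ε)^n :=
        pow_le_pow_of_le_one (by linarith) (by linarith) (Nat.le_succ n)
      have : (0:ℝ) ≤ (F.card : ℝ) := by positivity
      nlinarith
    have h3 : ((finInterior (kiter K n) F).card : ℝ) + (finBoundary (kiter K n) F).card
        = F.card := by exact_mod_cast interior_card_add (kiter K n) F
    linarith
  obtain ⟨T, hT⟩ := exists_doubling hL
  obtain ⟨f, hinj, hf⟩ := exists_injections hT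
  exact measure_contradiction μ hpos hadd huniv hinv f hinj hf

open scoped Classical in
lemma card_filter_translate_le (s : S) (A : Set S) (F : Finset S) :
    (F.filter (· ∈ (s * ·) ⁻¹' A)).card
      ≤ (F.filter (· ∈ A)).card + (finBoundary {s} F).card := by
  classical
  set int := finInterior {s} F with hint
  have hsplit : F.filter (· ∈ (s * ·) ⁻¹' A)
      ⊆ (int.filter (· ∈ (s * ·) ⁻¹' A)) ∪ finBoundary {s} F := by
    intro u hu
    rw [Finset.mem_filter] at hu
    by_cases h : ∀ k ∈ ({s} : Finset S), k * u ∈ F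
    · exact Finset.mem_union_left _ (Finset.mem_filter.2 ⟨mem_finInterior.2 ⟨hu.1, h⟩, hu.2⟩)
    · exact Finset.mem_union_right _ (Finset.mem_filter.2 ⟨hu.1, h⟩)
  have hinj2 : (int.filter (· ∈ (s * ·) ⁻¹' A)).card ≤ (F.filter (· ∈ A)).card := by
    refine Finset.card_le_card_of_injOn (fun t => s * t) ?_ ?_
    · intro t ht
      rw [Finset.mem_coe, Finset.mem_filter] at ht
      have h1 : s * t ∈ F := (mem_finInterior.1 ht.1).2 s (Finset.mem_singleton_self s)
      have h2 : s * t ∈ A := ht.2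
      exact Finset.mem_filter.2 ⟨h1, h2⟩
    · intro a _ b _ hab
      exact mul_left_cancel hab
  calc (F.filter (· ∈ (s * ·) ⁻¹' A)).card
      ≤ ((int.filter (· ∈ (s * ·) ⁻¹' A)) ∪ finBoundary {s} F).card :=
        Finset.card_le_card hsplit
    _ ≤ (int.filter (· ∈ (s * ·) ⁻¹' A)).card + (finBoundary {s} F).card :=
        Finset.card_union_le _ _
    _ ≤ (F.filter (· ∈ A)).card + (finBoundary {s} F).card := by
        exact Nat.add_le_add_right hinj2 _

open scoped Classical in
lemma card_filter_translate_ge (s : S) (A : Set S) (F : Finset S) :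
    (F.filter (· ∈ A)).card
      ≤ (F.filter (· ∈ (s * ·) ⁻¹' A)).card + (finBoundary {s} F).card := by
  classical
  set int := finInterior {s} F with hint
  set img := (int.filter (· ∈ (s * ·) ⁻¹' A)).image (fun t => s * t) with himg
  have himgF : int.image (fun t => s * t) ⊆ F := by
    intro u hu
    obtain ⟨t, ht, rfl⟩ := Finset.mem_image.1 hu
    exact (mem_finInterior.1 ht).2 s (Finset.mem_singleton_self s)
  have hsub : F.filter (· ∈ A) ⊆ img ∪ (F \ int.image (fun t => s * t)) := by
    intro u hu
    rw [Finset.mem_filter] at hu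
    by_cases h : u ∈ int.image (fun t => s * t)
    · obtain ⟨t, ht, rfl⟩ := Finset.mem_image.1 h
      refine Finset.mem_union_left _ (Finset.mem_image.2 ⟨t, ?_, rfl⟩)
      exact Finset.mem_filter.2 ⟨ht, hu.2⟩
    · exact Finset.mem_union_right _ (Finset.mem_sdiff.2 ⟨hu.1, h⟩)
  have h1 : img.card ≤ (F.filter (· ∈ (s * ·) ⁻¹' A)).card := by
    rw [himg, Finset.card_image_of_injective _ (mul_right_injective s)]
    refine Finset.card_le_card (Finset.filter_subset_filter _ ?_)
    exact finInterior_subset {s} F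
  have h2 : (F \ int.image (fun t => s * t)).card = (finBoundary {s} F).card := by
    rw [Finset.card_sdiff_of_subset himgF, Finset.card_image_of_injective _ (mul_right_injective s)]
    have h3 : int.card + (finBoundary {s} F).card = F.card := interior_card_add {s} F
    omega
  calc (F.filter (· ∈ A)).card
      ≤ (img ∪ (F \ int.image (fun t => s * t))).card := Finset.card_le_card hsub
    _ ≤ img.card + (F \ int.image (fun t => s * t)).card := Finset.card_union_le _ _
    _ ≤ (F.filter (· ∈ (s * ·) ⁻¹' A)).card + (finBoundary {s} F).card := by
        rw [h2]
        exact Nat.add_le_add_right h1 _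

open scoped Classical in
lemma dens_translate (s : S) (A : Set S) {F : Finset S} (hF : F.Nonempty) :
    |((F.filter (· ∈ (s * ·) ⁻¹' A)).card : ℝ) / F.card
      - ((F.filter (· ∈ A)).card : ℝ) / F.card| ≤ amenConst F {s} := by
  classical
  have hc : (0:ℝ) < F.card := by exact_mod_cast Finset.card_pos.2 hF
  rw [div_sub_div_same, amenConst, abs_div, abs_of_pos hc]
  have h1' : ((F.filter (· ∈ (s * ·) ⁻¹' A)).card : ℝ)
      ≤ ((F.filter (· ∈ A)).card : ℝ) + ((finBoundary {s} F).card : ℝ) := by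
    exact_mod_cast card_filter_translate_le s A F
  have h2' : ((F.filter (· ∈ A)).card : ℝ)
      ≤ ((F.filter (· ∈ (s * ·) ⁻¹' A)).card : ℝ) + ((finBoundary {s} F).card : ℝ) := by
    exact_mod_cast card_filter_translate_ge s A F
  have hnum : |((F.filter (· ∈ (s * ·) ⁻¹' A)).card : ℝ) - ((F.filter (· ∈ A)).card : ℝ)|
      ≤ ((finBoundary {s} F).card : ℝ) := by
    rw [abs_sub_le_iff]
    constructor <;> linarith
  gcongr

open Filter in
open scoped Classical in
lemma measure_of_folner
    (h : ∀ (K : Finset S) (ε : ℝ), 0 < ε →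
        ∃ F : Finset S, F.Nonempty ∧ amenConst F K ≤ ε) :
    ∃ μ : Set S → ℝ,
      (∀ A : Set S, 0 ≤ μ A ∧ μ A ≤ 1) ∧
      (∀ A B : Set S, Disjoint A B → μ (A ∪ B) = μ A + μ B) ∧
      μ Set.univ = 1 ∧
      (∀ (s : S) (A : Set S), μ ((s * ·) ⁻¹' A) = μ A) := by
  classical
  set G : Finset S × ℕ → Set (Finset S) := fun p =>
    {F | F.Nonempty ∧ amenConst F p.1 ≤ 1 / (p.2 + 1)} with hG
  have hGne : ∀ p, (G p).Nonempty := by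
    intro p
    obtain ⟨F, hF1, hF2⟩ := h p.1 (1/(p.2+1)) (by positivity)
    exact ⟨F, hF1, hF2⟩
  have hbmono : ∀ (K K' : Finset S), K ⊆ K' → ∀ F : Finset S,
      amenConst F K ≤ amenConst F K' := by
    intro K K' hKK F
    rw [amenConst, amenConst]
    have hsub : finBoundary K F ⊆ finBoundary K' F := by
      intro x hx
      rw [finBoundary, Finset.mem_filter] at hx ⊢
      refine ⟨hx.1, fun hall => hx.2 (fun k hk => hall k (hKK hk))⟩
    have : ((finBoundary K F).card : ℝ) ≤ ((finBoundary K' F).card : ℝ) := by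
      exact_mod_cast Finset.card_le_card hsub
    gcongr
  have hdir : Directed (· ≥ ·) (fun p => Filter.principal (G p)) := by
    intro p q
    refine ⟨(p.1 ∪ q.1, max p.2 q.2), ?_, ?_⟩
    · refine Filter.principal_mono.2 ?_
      rintro F ⟨hF1, hF2⟩
      refine ⟨hF1, ?_⟩
      calc amenConst F p.1 ≤ amenConst F (p.1 ∪ q.1) :=
            hbmono _ _ Finset.subset_union_left F
        _ ≤ 1 / (↑(max p.2 q.2) + 1) := hF2
        _ ≤ 1 / (↑p.2 + 1) := by
            apply one_div_le_one_div_of_le (by positivity)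
            have : p.2 ≤ max p.2 q.2 := le_max_left _ _
            exact_mod_cast Nat.add_le_add_right this 1
    · refine Filter.principal_mono.2 ?_
      rintro F ⟨hF1, hF2⟩
      refine ⟨hF1, ?_⟩
      calc amenConst F q.1 ≤ amenConst F (p.1 ∪ q.1) :=
            hbmono _ _ Finset.subset_union_right F
        _ ≤ 1 / (↑(max p.2 q.2) + 1) := hF2
        _ ≤ 1 / (↑q.2 + 1) := by
            apply one_div_le_one_div_of_le (by positivity)
            have : q.2 ≤ max p.2 q.2 := le_max_right _ _
            exact_mod_cast Nat.add_le_add_right this 1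
  have hNB : Filter.NeBot (⨅ p, Filter.principal (G p)) :=
    Filter.iInf_neBot_of_directed hdir
      (fun p => Filter.principal_neBot_iff.2 (hGne p))
  obtain ⟨U, hU⟩ := Ultrafilter.exists_le (⨅ p, Filter.principal (G p))
  have hUG : ∀ p, G p ∈ U := fun p =>
    Filter.le_principal_iff.1 (hU.trans (iInf_le _ p))
  set dens : Set S → Finset S → ℝ :=
    fun A F => ((F.filter (· ∈ A)).card : ℝ) / F.card with hdens
  have hIcc : ∀ (A : Set S) (F : Finset S), dens A F ∈ Set.Icc (0:ℝ) 1 := by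
    intro A F
    constructor
    · positivity
    · apply div_le_one_of_le₀
      · exact_mod_cast Finset.card_le_card (Finset.filter_subset _ _)
      · positivity
  have hex : ∀ A : Set S, ∃ x, Filter.Tendsto (dens A) ↑U (nhds x) ∧ x ∈ Set.Icc (0:ℝ) 1 := by
    intro A
    have hmem : (↑(U.map (dens A)) : Filter ℝ) ≤ Filter.principal (Set.Icc 0 1) := by
      rw [Ultrafilter.coe_map, Filter.le_principal_iff, Filter.mem_map]
      exact Filter.univ_mem' (fun F => hIcc A F)
    obtain ⟨x, hx, hconv⟩ := (isCompact_Icc (a := (0:ℝ)) (b := 1)).ultrafilter_le_nhds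
      (U.map (dens A)) hmem
    rw [Ultrafilter.coe_map] at hconv
    exact ⟨x, hconv, hx⟩
  choose μ hμ using hex
  have hNBU : Filter.NeBot (↑U : Filter (Finset S)) := U.neBot
  refine ⟨μ, ?_, ?_, ?_, ?_⟩
  · exact fun A => ⟨(hμ A).2.1, (hμ A).2.2⟩
  · intro A B hAB
    have h1 : Filter.Tendsto (dens (A ∪ B)) ↑U (nhds (μ A + μ B)) := by
      refine ((hμ A).1.add (hμ B).1).congr ?_
      intro F
      rw [hdens]
      simp only
      rw [← add_div]
      congr 1
      rw [← Nat.cast_add]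
      congr 1
      have hdisjF : Disjoint (F.filter (· ∈ A)) (F.filter (· ∈ B)) := by
        rw [Finset.disjoint_left]
        intro x hx hx'
        exact Set.disjoint_left.1 hAB (Finset.mem_filter.1 hx).2 (Finset.mem_filter.1 hx').2
      rw [← Finset.card_union_of_disjoint hdisjF]
      congr 1
      ext x
      simp only [Finset.mem_union, Finset.mem_filter, Set.mem_union]
      tauto
    exact tendsto_nhds_unique (hμ (A ∪ B)).1 h1
  · have hev : (dens Set.univ) =ᶠ[↑U] (fun _ => (1:ℝ)) := by
      filter_upwards [hUG (∅, 0)] with F hF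
      have hc : (0:ℝ) < F.card := by exact_mod_cast Finset.card_pos.2 hF.1
      rw [hdens]
      simp only
      simp only [Set.mem_univ, Finset.filter_true]
      exact div_self hc.ne'
    have h1 : Filter.Tendsto (dens Set.univ) ↑U (nhds 1) :=
      Filter.Tendsto.congr' hev.symm tendsto_const_nhds
    exact tendsto_nhds_unique (hμ Set.univ).1 h1
  · intro s A
    have hdiff : Filter.Tendsto (fun F => dens ((s * ·) ⁻¹' A) F - dens A F) ↑U
        (nhds (μ ((s * ·) ⁻¹' A) - μ A)) := (hμ _).1.sub (hμ A).1
    have hzero : Filter.Tendsto (fun F => dens ((s * ·) ⁻¹' A) F - dens A F) ↑U (nhds 0) := by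
      rw [Metric.tendsto_nhds]
      intro δ hδ
      obtain ⟨n, hn⟩ := exists_nat_one_div_lt hδ
      filter_upwards [hUG ({s}, n)] with F hF
      rw [Real.dist_eq, sub_zero]
      have hb := dens_translate s A hF.1
      calc |dens ((s * ·) ⁻¹' A) F - dens A F| ≤ amenConst F {s} := hb
        _ ≤ 1 / (↑n + 1) := hF.2
        _ < δ := hn
    have := tendsto_nhds_unique hdiff hzero
    linarith
end AmenAux


/-- Proposition 2.3: a left-cancellative semigroup `S` is left-amenable if and only if,
for every finite `K ⊆ S` and every `ε > 0`, there is a nonempty finite `F ⊆ S`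
with `α(F, K) ≤ ε`. -/
theorem leftAmenable_iff_amenConst {S : Type*} [Semigroup S] [IsLeftCancelMul S]
    [DecidableEq S] :
    LeftAmenable S ↔
      ∀ (K : Finset S) (ε : ℝ), 0 < ε →
        ∃ F : Finset S, F.Nonempty ∧ amenConst F K ≤ ε := by
  constructor
  · rintro ⟨μ, hbd, hadd, huniv, hinv⟩ K ε hε
    exact AmenAux.folner_of_measure μ hbd hadd huniv hinv K ε hε
  · intro h
    exact AmenAux.measure_of_folner h
end

section
/- Let S be a left-cancellative semigroup and let (F_i)_{i∈I} be a net of nonempty finite subsets of S indexed by a nonempty directed set I. Then the following conditions are equivalent: (a) (F_i)_{i∈I} is a left-Følner net for S, i.e. lim_i |sF_i \ F_i|/|F_i| = 0 for every s ∈ S; (b) for each finite subset K of S, lim_i α(F_i, K) = 0. -/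
open Filter

lemma card_sdiff_eq_card_filter {S : Type*} [Semigroup S] [IsLeftCancelMul S] [DecidableEq S]
    (s : S) (A : Finset S) :
    ((A.image (s * ·)) \ A).card = (A.filter fun t => s * t ∉ A).card := by
  have hinj : Function.Injective (s * ·) := fun a b h => mul_left_cancel h
  have him : (A.filter fun t => s * t ∉ A).image (s * ·) = (A.image (s * ·)) \ A := by
    ext x
    simp only [Finset.mem_image, Finset.mem_filter, Finset.mem_sdiff]
    constructor
    · rintro ⟨t, ⟨ht, hnt⟩, rfl⟩; exact ⟨⟨t, ht, rfl⟩, hnt⟩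
    · rintro ⟨⟨t, ht, rfl⟩, hx⟩; exact ⟨t, ⟨ht, hx⟩, rfl⟩
  rw [← him, Finset.card_image_of_injective _ hinj]

/-- Proposition 2.4: for a left-cancellative semigroup `S` and a net `(F_i)_{i ∈ I}` of
nonempty finite subsets of `S` indexed by a nonempty directed set `I`, the net is a
left-Følner net (i.e. `|s F_i \ F_i| / |F_i| → 0` for all `s ∈ S`) if and only if
`α(F_i, K) → 0` for every finite subset `K` of `S`. -/
theorem folnerNet_iff_amenConst_tendsto {S : Type*} [Semigroup S] [IsLeftCancelMul S]
    [DecidableEq S] {I : Type*} [Preorder I] [Nonempty I] [IsDirected I (· ≤ ·)]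
    (F : I → Finset S) (hF : ∀ i, (F i).Nonempty) :
    (∀ s : S,
        Tendsto (fun i => ((((F i).image (s * ·)) \ F i).card : ℝ) / ((F i).card : ℝ))
          atTop (nhds 0)) ↔
      ∀ K : Finset S, Tendsto (fun i => amenConst (F i) K) atTop (nhds 0) := by
  constructor
  · intro h K
    have hsum : Tendsto
        (fun i => ∑ k ∈ K, ((((F i).image (k * ·)) \ F i).card : ℝ) / ((F i).card : ℝ))
        atTop (nhds 0) := by
      have := tendsto_finset_sum K (fun k _ => h k)
      simpa using this
    refine tendsto_of_tendsto_of_tendsto_of_le_of_le tendsto_const_nhds hsum ?_ ?_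
    · intro i
      exact div_nonneg (Nat.cast_nonneg _) (Nat.cast_nonneg _)
    · intro i
      have hpos : (0 : ℝ) < ((F i).card : ℝ) := by
        exact_mod_cast Finset.card_pos.mpr (hF i)
      have hsub : finBoundary K (F i) ⊆ K.biUnion fun k => (F i).filter fun t => k * t ∉ F i := by
        intro t ht
        simp only [finBoundary, Finset.mem_filter] at ht
        push_neg at ht
        obtain ⟨ht1, k, hk, hkt⟩ := ht
        exact Finset.mem_biUnion.mpr ⟨k, hk, Finset.mem_filter.mpr ⟨ht1, hkt⟩⟩
      have hcard : ((finBoundary K (F i)).card : ℝ) ≤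
          ∑ k ∈ K, (((F i).filter fun t => k * t ∉ F i).card : ℝ) := by
        calc ((finBoundary K (F i)).card : ℝ)
            ≤ ((K.biUnion fun k => (F i).filter fun t => k * t ∉ F i).card : ℝ) := by
              exact_mod_cast Finset.card_le_card hsub
          _ ≤ ∑ k ∈ K, (((F i).filter fun t => k * t ∉ F i).card : ℝ) := by
              exact_mod_cast Finset.card_biUnion_le
      show ((finBoundary K (F i)).card : ℝ) / ((F i).card : ℝ) ≤ _
      rw [div_le_iff₀ hpos]
      simp only [Finset.sum_mul]
      refine hcard.trans (le_of_eq (Finset.sum_congr rfl fun k _ => ?_))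
      rw [card_sdiff_eq_card_filter, div_mul_cancel₀ _ hpos.ne']
  · intro h s
    have heq : (fun i => ((((F i).image (s * ·)) \ F i).card : ℝ) / ((F i).card : ℝ))
        = fun i => amenConst (F i) {s} := by
      funext i
      have hfil : (F i).filter (fun t => s * t ∉ F i) = finBoundary {s} (F i) := by
        unfold finBoundary
        apply Finset.filter_congr
        intro t _
        simp
      rw [card_sdiff_eq_card_filter, hfil]
      rfl
    rw [heq]
    exact h {s}
end

section
/- Let S be a semigroup, let K be a finite subset of S, and let 0 < ε < 1. Suppose (A_j)_{j∈J} is a finite nonempty ε-disjoint family of nonempty finite subsets of S. Then α(⋃_{j∈J} A_j, K) ≤ (1/(1−ε)) · max_{j∈J} α(A_j, K). -/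
/-- A family `(A j)_{j ∈ J}` of finite subsets of `X` is `ε`-disjoint if there is a family
`(B j)_{j ∈ J}` of pairwise disjoint subsets of `X` with `B j ⊆ A j` and
`|B j| ≥ (1 - ε) |A j|` for all `j`. -/
def EpsDisjoint {X : Type*} (ε : ℝ) {J : Type*} (A : J → Finset X) : Prop :=
  ∃ B : J → Finset X,
    Pairwise (fun i j => Disjoint (B i) (B j)) ∧
    ∀ j, B j ⊆ A j ∧ (1 - ε) * ((A j).card : ℝ) ≤ ((B j).card : ℝ)

/-- Lemma 3.3: if `(A j)_{j ∈ J}` is a finite nonempty `ε`-disjoint family of nonempty finite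
subsets of a semigroup `S` (with `0 < ε < 1`) and `K ⊆ S` is finite, then
`α(⋃_j A j, K) ≤ (1 / (1 - ε)) · max_j α(A j, K)`. -/
theorem amenConst_biUnion_le {S : Type*} [Semigroup S] [DecidableEq S]
    {J : Type*} [Fintype J] [Nonempty J] [DecidableEq J]
    (K : Finset S) (ε : ℝ) (hε₀ : 0 < ε) (hε₁ : ε < 1)
    (A : J → Finset S) (hA : ∀ j, (A j).Nonempty) (hd : EpsDisjoint ε A) :
    amenConst (Finset.univ.biUnion A) K ≤
      (1 / (1 - ε)) * Finset.univ.sup' Finset.univ_nonempty (fun j => amenConst (A j) K) := by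
  obtain ⟨B, hpair, hB⟩ := hd
  set U := Finset.univ.biUnion A with hUdef
  have hUne : U.Nonempty := by
    obtain ⟨x, hx⟩ := hA (Classical.arbitrary J)
    exact ⟨x, Finset.mem_biUnion.mpr ⟨_, Finset.mem_univ _, hx⟩⟩
  have hUpos : (0:ℝ) < U.card := by exact_mod_cast Finset.card_pos.mpr hUne
  set M := Finset.univ.sup' Finset.univ_nonempty (fun j => amenConst (A j) K) with hM
  have hMge : ∀ j, amenConst (A j) K ≤ M := fun j => Finset.le_sup' (fun j => amenConst (A j) K) (Finset.mem_univ j)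
  have hM0 : 0 ≤ M := by
    refine le_trans ?_ (hMge (Classical.arbitrary J))
    unfold amenConst
    positivity
  have h1ε : (0:ℝ) < 1 - ε := by linarith
  have hsub : finBoundary K U ⊆ Finset.univ.biUnion (fun j => finBoundary K (A j)) := by
    intro s hs
    simp only [finBoundary, Finset.mem_filter, Finset.mem_biUnion] at hs ⊢
    obtain ⟨hsU, hns⟩ := hs
    obtain ⟨j, _, hj⟩ := Finset.mem_biUnion.mp hsU
    exact ⟨j, Finset.mem_univ j, hj,
      fun h => hns (fun k hk => Finset.mem_biUnion.mpr ⟨j, Finset.mem_univ j, h k hk⟩)⟩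
  have h1 : ((finBoundary K U).card : ℝ) ≤ ∑ j, ((finBoundary K (A j)).card : ℝ) := by
    calc ((finBoundary K U).card : ℝ)
        ≤ ((Finset.univ.biUnion (fun j => finBoundary K (A j))).card : ℝ) := by
          exact_mod_cast Finset.card_le_card hsub
      _ ≤ ∑ j, ((finBoundary K (A j)).card : ℝ) := by
          exact_mod_cast Finset.card_biUnion_le
  have h2 : ∀ j, ((finBoundary K (A j)).card : ℝ) ≤ M * (A j).card := by
    intro j
    have hpos : (0:ℝ) < (A j).card := by exact_mod_cast Finset.card_pos.mpr (hA j)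
    have h := hMge j
    rw [amenConst, div_le_iff₀ hpos] at h
    exact h
  have h3 : ∑ j, ((A j).card : ℝ) ≤ (1/(1-ε)) * U.card := by
    have hcard : ((Finset.univ.biUnion B).card : ℝ) = ∑ j, ((B j).card : ℝ) := by
      exact_mod_cast Finset.card_biUnion (fun i _ j _ hij => hpair hij)
    have hsubU : Finset.univ.biUnion B ⊆ U :=
      Finset.biUnion_subset.mpr fun j _ =>
        (hB j).1.trans (Finset.subset_biUnion_of_mem A (Finset.mem_univ j))
    have hBU : ∑ j, ((B j).card : ℝ) ≤ (U.card : ℝ) := by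
      rw [← hcard]; exact_mod_cast Finset.card_le_card hsubU
    have hAB : ∑ j, ((A j).card : ℝ) ≤ (1/(1-ε)) * ∑ j, ((B j).card : ℝ) := by
      rw [Finset.mul_sum]
      refine Finset.sum_le_sum fun j _ => ?_
      have := (hB j).2
      rw [div_mul_eq_mul_div, le_div_iff₀ h1ε, one_mul]
      linarith [this]
    calc ∑ j, ((A j).card : ℝ) ≤ (1/(1-ε)) * ∑ j, ((B j).card : ℝ) := hAB
      _ ≤ (1/(1-ε)) * U.card := by
          exact mul_le_mul_of_nonneg_left hBU (by positivity)
  have key : ((finBoundary K U).card : ℝ) ≤ (1/(1-ε)) * M * U.card := by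
    calc ((finBoundary K U).card : ℝ) ≤ ∑ j, ((finBoundary K (A j)).card : ℝ) := h1
      _ ≤ ∑ j, M * ((A j).card : ℝ) := Finset.sum_le_sum fun j _ => h2 j
      _ = M * ∑ j, ((A j).card : ℝ) := by rw [Finset.mul_sum]
      _ ≤ M * ((1/(1-ε)) * U.card) := mul_le_mul_of_nonneg_left h3 hM0
      _ = (1/(1-ε)) * M * U.card := by ring
  rw [amenConst, div_le_iff₀ hUpos]
  exact key
end

section
/- Let S be a semigroup and let K, A, and Ω be finite subsets of S such that every element of K is left-cancellable and ∅ ≠ A ⊆ Ω. Let ε > 0 be a real number such that |Ω \ A| ≥ ε|Ω|. Then α(Ω \ A, K) ≤ (α(Ω, K) + |K| · α(A, K)) / ε. -/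
lemma filter_mul_mem_card_le {S : Type*} [Semigroup S] [DecidableEq S]
    (A Ω : Finset S) (k : S) (hk : Function.Injective (k * ·)) :
    ((Ω \ A).filter fun s => k * s ∈ A).card ≤ (A.filter fun a => ¬ k * a ∈ A).card := by
  have himg : (((Ω \ A).filter fun s => k * s ∈ A).image (k * ·)) ⊆ A \ A.image (k * ·) := by
    intro x hx
    simp only [Finset.mem_image, Finset.mem_filter, Finset.mem_sdiff] at hx ⊢
    obtain ⟨s, ⟨⟨hsΩ, hsA⟩, hks⟩, rfl⟩ := hx
    refine ⟨hks, ?_⟩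
    rintro ⟨a, haA, ha⟩
    exact hsA (hk ha ▸ haA)
  have h1 : (A ∩ A.image (k * ·)).card + (A \ A.image (k * ·)).card = A.card :=
    Finset.card_inter_add_card_sdiff A _
  have h2 : (A.filter fun a => k * a ∈ A).card + (A.filter fun a => ¬ k * a ∈ A).card = A.card :=
    Finset.card_filter_add_card_filter_not _
  have h3 : A ∩ A.image (k * ·) = (A.filter fun a => k * a ∈ A).image (k * ·) := by
    ext x
    simp only [Finset.mem_inter, Finset.mem_image, Finset.mem_filter]
    constructor
    · rintro ⟨hxA, a, haA, rfl⟩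
      exact ⟨a, ⟨haA, hxA⟩, rfl⟩
    · rintro ⟨a, ⟨haA, hka⟩, rfl⟩
      exact ⟨hka, a, haA, rfl⟩
  have h4 : (A ∩ A.image (k * ·)).card = (A.filter fun a => k * a ∈ A).card := by
    rw [h3, Finset.card_image_of_injective _ hk]
  calc ((Ω \ A).filter fun s => k * s ∈ A).card
      = (((Ω \ A).filter fun s => k * s ∈ A).image (k * ·)).card :=
        (Finset.card_image_of_injective _ hk).symm
    _ ≤ (A \ A.image (k * ·)).card := Finset.card_le_card himg
    _ = (A.filter fun a => ¬ k * a ∈ A).card := by omega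

lemma boundary_sdiff_card_le {S : Type*} [Semigroup S] [DecidableEq S]
    (K A Ω : Finset S) (hK : ∀ k ∈ K, Function.Injective (k * ·)) (hAΩ : A ⊆ Ω) :
    (finBoundary K (Ω \ A)).card ≤
      (finBoundary K Ω).card + K.card * (finBoundary K A).card := by
  have hsub : finBoundary K (Ω \ A) ⊆
      finBoundary K Ω ∪ K.biUnion (fun k => (Ω \ A).filter fun s => k * s ∈ A) := by
    intro s hs
    simp only [finBoundary, Finset.mem_filter, Finset.mem_sdiff] at hs
    obtain ⟨⟨hsΩ, hsA⟩, hbd⟩ := hs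
    push_neg at hbd
    obtain ⟨k, hkK, hks⟩ := hbd
    by_cases hksA : k * s ∈ A
    · refine Finset.mem_union_right _ ?_
      simp only [Finset.mem_biUnion, Finset.mem_filter, Finset.mem_sdiff]
      exact ⟨k, hkK, ⟨hsΩ, hsA⟩, hksA⟩
    · refine Finset.mem_union_left _ ?_
      simp only [finBoundary, Finset.mem_filter]
      exact ⟨hsΩ, fun h => hksA (hks (h k hkK))⟩
  calc (finBoundary K (Ω \ A)).card
      ≤ (finBoundary K Ω ∪ K.biUnion (fun k => (Ω \ A).filter fun s => k * s ∈ A)).card :=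
        Finset.card_le_card hsub
    _ ≤ (finBoundary K Ω).card +
          (K.biUnion (fun k => (Ω \ A).filter fun s => k * s ∈ A)).card :=
        Finset.card_union_le _ _
    _ ≤ (finBoundary K Ω).card + K.card * (finBoundary K A).card := by
        gcongr
        calc (K.biUnion (fun k => (Ω \ A).filter fun s => k * s ∈ A)).card
            ≤ ∑ k ∈ K, ((Ω \ A).filter fun s => k * s ∈ A).card :=
              Finset.card_biUnion_le
          _ ≤ ∑ k ∈ K, (finBoundary K A).card := by
              refine Finset.sum_le_sum fun k hkK => ?_
              refine le_trans (filter_mul_mem_card_le A Ω k (hK k hkK)) ?_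
              refine Finset.card_le_card ?_
              intro a ha
              simp only [Finset.mem_filter, finBoundary] at ha ⊢
              exact ⟨ha.1, fun h => ha.2 (h k hkK)⟩
          _ = K.card * (finBoundary K A).card := by
              rw [Finset.sum_const, smul_eq_mul]

/-- Lemma 3.4: if every element of `K` is left-cancellable, `∅ ≠ A ⊆ Ω` are finite subsets
of the semigroup `S`, and `|Ω \ A| ≥ ε |Ω|` for some real `ε > 0`, then
`α(Ω \ A, K) ≤ (α(Ω, K) + |K| α(A, K)) / ε`. -/
theorem amenConst_sdiff_le {S : Type*} [Semigroup S] [DecidableEq S]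
    (K A Ω : Finset S) (hK : ∀ k ∈ K, Function.Injective (k * ·))
    (hA : A.Nonempty) (hAΩ : A ⊆ Ω)
    (ε : ℝ) (hε : 0 < ε) (hcard : ε * (Ω.card : ℝ) ≤ ((Ω \ A).card : ℝ)) :
    amenConst (Ω \ A) K ≤ (amenConst Ω K + (K.card : ℝ) * amenConst A K) / ε := by
  have hApos : (0:ℝ) < A.card := by exact_mod_cast Finset.card_pos.mpr hA
  have hΩpos : (0:ℝ) < Ω.card :=
    lt_of_lt_of_le hApos (by exact_mod_cast Finset.card_le_card hAΩ)
  have hAleΩ : (A.card : ℝ) ≤ Ω.card := by exact_mod_cast Finset.card_le_card hAΩ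
  have hBpos : (0:ℝ) < ((Ω \ A).card : ℝ) := lt_of_lt_of_le (mul_pos hε hΩpos) hcard
  have hcount : ((finBoundary K (Ω \ A)).card : ℝ) ≤
      (finBoundary K Ω).card + (K.card : ℝ) * (finBoundary K A).card := by
    exact_mod_cast boundary_sdiff_card_le K A Ω hK hAΩ
  rw [amenConst, amenConst, amenConst, div_le_div_iff₀ hBpos hε]
  have hx : (0:ℝ) ≤ (finBoundary K Ω).card := Nat.cast_nonneg _
  have hy : (0:ℝ) ≤ (finBoundary K A).card := Nat.cast_nonneg _
  have hκ : (0:ℝ) ≤ K.card := Nat.cast_nonneg _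
  rw [mul_div_assoc', div_add_div _ _ (ne_of_gt hΩpos) (ne_of_gt hApos)]
  rw [div_mul_eq_mul_div, le_div_iff₀ (mul_pos hΩpos hApos)]
  ring_nf
  nlinarith [mul_nonneg hκ hy, mul_pos hε hΩpos, mul_nonneg (mul_nonneg hκ hy) hΩpos.le,
    mul_le_mul_of_nonneg_right hcard (mul_nonneg hx hApos.le),
    mul_le_mul_of_nonneg_right hcard (mul_nonneg (mul_nonneg hκ hy) hΩpos.le),
    mul_le_mul_of_nonneg_right hAleΩ (mul_nonneg (mul_nonneg hκ hy) (mul_pos hε hΩpos).le),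
    mul_le_mul_of_nonneg_right hcount (mul_pos (mul_pos hε hΩpos) hApos).le]
end

section
/- (Filling lemma) Let S be a cancellative semigroup and let Ω and K be nonempty finite subsets of S. Then, for every real number ε with 0 < ε ≤ 1, there exists an (ε, K)-filling pattern P for Ω such that |KP| ≥ ε(1 − α(Ω, K))|Ω|, where KP = ⋃_{s∈P} Ks. -/
/-- The right `K`-interior of a finite subset `Ω` of a semigroup:
`int_K(Ω) = {s ∈ Ω : Ks ⊆ Ω}`. -/
def finInterior {S : Type*} [Mul S] [DecidableEq S] (K Ω : Finset S) : Finset S :=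
  Ω.filter fun s => ∀ k ∈ K, k * s ∈ Ω

/-- A finite subset `P ⊆ S` is an `(ε, K)`-filling pattern for `Ω` if `P ⊆ int_K(Ω)` and
the family `(Ks)_{s ∈ P}` is `ε`-disjoint. -/
def IsFillingPattern {S : Type*} [Mul S] [DecidableEq S]
    (ε : ℝ) (K Ω P : Finset S) : Prop :=
  P ⊆ finInterior K Ω ∧ EpsDisjoint ε (fun s : { x // x ∈ P } => K.image (· * s.val))

/-- Lemma 3.7 (Filling lemma): if `S` is a cancellative semigroup, `Ω` and `K` are nonempty
finite subsets of `S`, and `0 < ε ≤ 1`, then there exists an `(ε, K)`-filling pattern `P`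
for `Ω` with `|KP| ≥ ε (1 - α(Ω, K)) |Ω|`, where `KP = ⋃_{s ∈ P} Ks`. -/
theorem filling_lemma {S : Type*} [Semigroup S] [IsCancelMul S] [DecidableEq S]
    (Ω K : Finset S) (hΩ : Ω.Nonempty) (hK : K.Nonempty)
    (ε : ℝ) (hε₀ : 0 < ε) (hε₁ : ε ≤ 1) :
    ∃ P : Finset S, IsFillingPattern ε K Ω P ∧
      ε * (1 - amenConst Ω K) * (Ω.card : ℝ) ≤
        ((P.biUnion (fun s => K.image (· * s))).card : ℝ) := by
  classical
  set intΩ := finInterior K Ω with hintdef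
  set Ks : S → Finset S := fun s => K.image (· * s) with hKsdef
  have hcardKs : ∀ s, (Ks s).card = K.card := fun s =>
    Finset.card_image_of_injective _ (fun a b h => mul_right_cancel h)
  set Good : Finset S → Prop := fun P => P ⊆ intΩ ∧ ∃ B : S → Finset S,
      (∀ s ∈ P, B s ⊆ Ks s ∧ (1 - ε) * ((Ks s).card : ℝ) ≤ ((B s).card : ℝ)) ∧
      (Set.Pairwise (P : Set S) fun a b => Disjoint (B a) (B b)) with hGooddef
  have hGoodEmpty : Good ∅ := ⟨by simp, fun _ => ∅, by simp, by simp⟩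
  obtain ⟨P, hPmem, hPmax⟩ := Finset.exists_max_image
      ((intΩ.powerset).filter Good) Finset.card
      ⟨∅, Finset.mem_filter.mpr ⟨Finset.empty_mem_powerset _, hGoodEmpty⟩⟩
  obtain ⟨hPint, B, hB, hBdisj⟩ : Good P := (Finset.mem_filter.mp hPmem).2
  set KP := P.biUnion Ks with hKPdef
  -- key claim from maximality
  have key : ∀ s ∈ intΩ, ε * (K.card : ℝ) ≤ ((Ks s ∩ KP).card : ℝ) := by
    intro s hs
    by_cases hsP : s ∈ P
    · have hsub : Ks s ⊆ KP := Finset.subset_biUnion_of_mem Ks hsP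
      rw [Finset.inter_eq_left.mpr hsub, hcardKs]
      nlinarith [Nat.cast_nonneg' (α := ℝ) K.card]
    · by_contra hlt
      push_neg at hlt
      -- then insert s P is Good, contradicting maximality
      set B' : S → Finset S := fun t => if t = s then Ks s \ KP else B t with hB'def
      have hGood' : Good (insert s P) := by
        refine ⟨Finset.insert_subset hs hPint, B', ?_, ?_⟩
        · intro t ht
          rcases Finset.mem_insert.mp ht with rfl | htP
          · constructor
            · simp [hB'def, Finset.sdiff_subset]
            · have hsplit := Finset.card_sdiff_add_card_inter (Ks t) KP
              have : ((Ks t \ KP).card : ℝ) + ((Ks t ∩ KP).card : ℝ) = (K.card : ℝ) := by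
                rw [← hcardKs t]; exact_mod_cast congrArg (Nat.cast (R := ℝ)) hsplit
              simp only [hB'def, if_pos rfl]
              rw [hcardKs]
              linarith
          · have hts : t ≠ s := fun h => hsP (h ▸ htP)
            simpa [hB'def, hts] using hB t htP
        · intro a ha b hb hab
          simp only [Finset.coe_insert, Set.mem_insert_iff, Finset.mem_coe] at ha hb
          have hBsub : ∀ t ∈ P, B t ⊆ KP := fun t ht =>
            (hB t ht).1.trans (Finset.subset_biUnion_of_mem Ks ht)
          rcases ha with rfl | haP
          · rcases hb with rfl | hbP
            · exact absurd rfl hab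
            · have hbs : b ≠ a := fun h => hsP (h ▸ hbP)
              simp only [hB'def, if_pos rfl, if_neg hbs]
              exact Finset.sdiff_disjoint.mono_right (hBsub b hbP)
          · rcases hb with rfl | hbP
            · have has : a ≠ b := fun h => hsP (h ▸ haP)
              simp only [hB'def, if_pos rfl, if_neg has]
              exact (Finset.sdiff_disjoint.mono_right (hBsub a haP)).symm
            · have has : a ≠ s := fun h => hsP (h ▸ haP)
              have hbs : b ≠ s := fun h => hsP (h ▸ hbP)
              simp only [hB'def, if_neg has, if_neg hbs]
              exact hBdisj haP hbP hab
      have hmem' : insert s P ∈ (intΩ.powerset).filter Good :=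
        Finset.mem_filter.mpr ⟨Finset.mem_powerset.mpr hGood'.1, hGood'⟩
      have := hPmax _ hmem'
      rw [Finset.card_insert_of_notMem hsP] at this
      omega
  -- double counting
  have count : ∀ x : S, (intΩ.filter fun s => x ∈ Ks s).card ≤ K.card := by
    intro x
    set f : S → S := fun s => if h : ∃ k, k ∈ K ∧ k * s = x then h.choose else hK.choose
      with hfdef
    have hmemKs : ∀ s, x ∈ Ks s ↔ ∃ k, k ∈ K ∧ k * s = x := by
      intro s; simp [hKsdef, Finset.mem_image, eq_comm]
    apply Finset.card_le_card_of_injOn f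
    · intro s hs
      obtain ⟨-, hx⟩ := Finset.mem_filter.mp hs
      have h := (hmemKs s).mp hx
      simp only [hfdef, dif_pos h]
      exact h.choose_spec.1
    · intro s₁ hs₁ s₂ hs₂ hf
      simp only [Finset.coe_filter, Set.mem_setOf_eq] at hs₁ hs₂
      have h₁ := (hmemKs s₁).mp hs₁.2
      have h₂ := (hmemKs s₂).mp hs₂.2
      simp only [hfdef, dif_pos h₁, dif_pos h₂] at hf
      have e₁ := h₁.choose_spec.2
      have e₂ := h₂.choose_spec.2
      rw [hf] at e₁
      exact mul_left_cancel (e₁.trans e₂.symm)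
  have sum_le : ∑ s ∈ intΩ, (Ks s ∩ KP).card ≤ K.card * KP.card := by
    have h1 : ∀ s ∈ intΩ, (Ks s ∩ KP).card = ∑ x ∈ KP, if x ∈ Ks s then 1 else 0 := by
      intro s _
      rw [Finset.inter_comm, ← Finset.filter_mem_eq_inter, Finset.card_filter]
    rw [Finset.sum_congr rfl h1, Finset.sum_comm]
    calc ∑ x ∈ KP, ∑ s ∈ intΩ, (if x ∈ Ks s then 1 else 0)
        = ∑ x ∈ KP, (intΩ.filter fun s => x ∈ Ks s).card := by
          refine Finset.sum_congr rfl fun x _ => ?_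
          rw [Finset.card_filter]
      _ ≤ ∑ _x ∈ KP, K.card := Finset.sum_le_sum fun x _ => count x
      _ = KP.card * K.card := by rw [Finset.sum_const, smul_eq_mul]
      _ = K.card * KP.card := Nat.mul_comm _ _
  -- combine to real inequality ε * |intΩ| ≤ |KP|
  have hKpos : (0 : ℝ) < K.card := by exact_mod_cast hK.card_pos
  have main : ε * (intΩ.card : ℝ) ≤ (KP.card : ℝ) := by
    have h1 : ε * (K.card : ℝ) * (intΩ.card : ℝ) ≤ (K.card : ℝ) * (KP.card : ℝ) := by
      calc ε * (K.card : ℝ) * (intΩ.card : ℝ)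
          = ∑ _s ∈ intΩ, ε * (K.card : ℝ) := by
            rw [Finset.sum_const, nsmul_eq_mul]; ring
        _ ≤ ∑ s ∈ intΩ, ((Ks s ∩ KP).card : ℝ) := Finset.sum_le_sum key
        _ = ((∑ s ∈ intΩ, (Ks s ∩ KP).card : ℕ) : ℝ) := by push_cast; ring
        _ ≤ ((K.card * KP.card : ℕ) : ℝ) := by exact_mod_cast sum_le
        _ = (K.card : ℝ) * (KP.card : ℝ) := by push_cast; ring
    nlinarith
  -- final arithmetic
  have hΩpos : (0 : ℝ) < Ω.card := by exact_mod_cast hΩ.card_pos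
  have hsplitΩ : intΩ.card + (finBoundary K Ω).card = Ω.card := by
    simpa [hintdef, finInterior, finBoundary] using
      Finset.card_filter_add_card_filter_not
        (s := Ω) (p := fun s => ∀ k ∈ K, k * s ∈ Ω)
  have hfinal : ε * (1 - amenConst Ω K) * (Ω.card : ℝ) ≤ (KP.card : ℝ) := by
    have hcast : (intΩ.card : ℝ) = (Ω.card : ℝ) - ((finBoundary K Ω).card : ℝ) := by
      have := congrArg (Nat.cast (R := ℝ)) hsplitΩ
      push_cast at this
      linarith
    have : ε * (1 - amenConst Ω K) * (Ω.card : ℝ) = ε * (intΩ.card : ℝ) := by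
      rw [amenConst, hcast]
      field_simp
    linarith [main, this.ge, this.le]
  refine ⟨P, ⟨hPint, fun i => B i.val, ?_, ?_⟩, hfinal⟩
  · intro i j hij
    exact hBdisj i.2 j.2 (fun h => hij (Subtype.ext h))
  · exact fun j => hB j.val j.2
end
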